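/- Let F_m be the free group on x_1,…,x_m and let l(w) denote the length of the reduced word representing w ∈ F_m. Let u, v ∈ {x_1,…,x_m} and C, D ∈ F_m be such that l(C u C^{-1}) = 2 l(C) + 1 and l(D v D^{-1}) = 2 l(D) + 1, and set f = (C u C^{-1}, D v D^{-1}) ∈ F_m^2; write l(f) = l(f_1) + l(f_2). Consider the Hurwitz action of σ = σ_1 ∈ B_2: σ(f_1,f_2) = (f_2, f_2^{-1} f_1 f_2) and σ^{-1}(f_1,f_2) = (f_1 f_2 f_1^{-1}, f_1). Then l(σ^{-1} f) ≥ l(f) and l(σ f) ≥ l(f) hold if and only if there exist Z, A, B ∈ F_m such that C = Z A with l(C) = l(Z) + l(A), D = Z B with l(D) = l(Z) + l(B), and l(C u C^{-1} D v D^{-1}) = 2 l(Z) + 2 l(A) + 2 l(B) + 2. -/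

import Mathlib

set_option linter.unusedSectionVars false
namespace RL
open FreeGroup List

variable {α : Type*} [DecidableEq α] {L L₁ L₂ : List (α × Bool)}

/-- Reduced word predicate. -/
def Rd (L : List (α × Bool)) : Prop := List.Chain' (fun a b => b ≠ (a.1, !a.2)) L

lemma rd_nil : Rd ([] : List (α × Bool)) := List.isChain_nil

lemma not_rd (h : ¬ Rd L) : ∃ (L₁ L₂ : List (α × Bool)) (x : α) (b : Bool),
    L = L₁ ++ (x, b) :: (x, !b) :: L₂ := by
  induction L with
  | nil => exact absurd rd_nil h
  | cons a t ih =>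
    rcases Classical.em (Rd t) with ht | ht
    · change ¬ List.IsChain _ (a :: t) at h; rw [List.isChain_cons] at h
      have h' : ¬ ∀ y ∈ t.head?, y ≠ (a.1, !a.2) := fun hh => h ⟨hh, ht⟩
      push_neg at h'
      obtain ⟨y, hy, hrel⟩ := h'
      cases t with
      | nil => simp at hy
      | cons b t' =>
        simp only [List.head?_cons, Option.mem_def, Option.some.injEq] at hy
        subst hy
        refine ⟨[], t', a.1, a.2, ?_⟩
        simp [hrel]
    · obtain ⟨P, Q, x, b, rfl⟩ := ih ht
      exact ⟨a :: P, Q, x, b, rfl⟩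

lemma Rd.no_step (h : Rd L) (hs : Red.Step L L₂) : False := by
  cases hs with
  | @not P Q x b =>
    have := (List.isChain_append.1 h).2.1
    rw [List.isChain_cons] at this
    exact this.1 (x, !b) rfl rfl

lemma Rd.reduce_eq (h : Rd L) : reduce L = L := by
  have hred : Red L (reduce L) := reduce.red
  rcases Relation.ReflTransGen.cases_head hred with heq | ⟨M, hstep, _⟩
  · exact heq.symm
  · exact (h.no_step hstep).elim

lemma rd_reduce (L : List (α × Bool)) : Rd (reduce L) := by
  by_contra h
  obtain ⟨P, Q, x, b, hP⟩ := not_rd h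
  exact reduce.not hP

lemma rd_toWord (g : FreeGroup α) : Rd g.toWord := by
  have := rd_reduce g.toWord
  rwa [reduce_toWord] at this

lemma toWord_mk_eq (h : Rd L) : (mk L).toWord = L := by
  rw [toWord_mk, h.reduce_eq]

lemma Rd.invRev (h : Rd L) : Rd (FreeGroup.invRev L) := by
  have := rd_reduce (FreeGroup.invRev L)
  rwa [reduce_invRev, h.reduce_eq] at this

lemma redLen_mk_le (L : List (α × Bool)) : (mk L).toWord.length ≤ L.length := by
  rw [toWord_mk]
  exact (Red.sublist reduce.red).length_le

lemma reduce_eq_of_len (h : (mk L).toWord.length = L.length) : Rd L := by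
  rw [toWord_mk] at h
  have : reduce L = L := (Red.sublist reduce.red).eq_of_length h
  have := rd_reduce L
  rwa [‹reduce L = L›] at this

end RL

namespace RL
open FreeGroup List

variable {α : Type*} [DecidableEq α] {L L₁ L₂ : List (α × Bool)}

lemma invRev_head? (L : List (α × Bool)) :
    (FreeGroup.invRev L).head? = L.getLast?.map (fun x => (x.1, !x.2)) := by
  rw [FreeGroup.invRev, List.head?_reverse, List.getLast?_map]

lemma invRev_getLast? (L : List (α × Bool)) :
    (FreeGroup.invRev L).getLast? = L.head?.map (fun x => (x.1, !x.2)) := by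
  rw [FreeGroup.invRev, List.getLast?_reverse, List.head?_map]

lemma Rd.append (h₁ : Rd L₁) (h₂ : Rd L₂)
    (j : ∀ x ∈ L₁.getLast?, ∀ y ∈ L₂.head?, y ≠ (x.1, !x.2)) : Rd (L₁ ++ L₂) :=
  List.IsChain.append h₁ h₂ j

lemma Rd.left (h : Rd (L₁ ++ L₂)) : Rd L₁ := List.IsChain.left_of_append h
lemma Rd.right (h : Rd (L₁ ++ L₂)) : Rd L₂ := List.IsChain.right_of_append h
lemma Rd.junction (h : Rd (L₁ ++ L₂)) :
    ∀ x ∈ L₁.getLast?, ∀ y ∈ L₂.head?, y ≠ (x.1, !x.2) := (List.isChain_append.1 h).2.2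

/-- longest common prefix -/
def lcp : List (α × Bool) → List (α × Bool) → List (α × Bool)
  | a :: as, b :: bs => if a = b then a :: lcp as bs else []
  | _, _ => []

lemma lcp_spec : ∀ (l₁ l₂ : List (α × Bool)), ∃ a b : List (α × Bool),
    l₁ = lcp l₁ l₂ ++ a ∧ l₂ = lcp l₁ l₂ ++ b ∧
    ∀ x ∈ a.head?, ∀ y ∈ b.head?, x ≠ y
  | [], l₂ => ⟨[], l₂, by simp [lcp]⟩
  | (a :: as), [] => ⟨a :: as, [], by simp [lcp]⟩
  | (a :: as), (b :: bs) => by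
    by_cases hab : a = b
    · subst hab
      obtain ⟨p, q, h1, h2, h3⟩ := lcp_spec as bs
      refine ⟨p, q, ?_, ?_, h3⟩
      · simp only [lcp, if_true, if_pos rfl, cons_append]
        rw [← h1]
      · simp only [lcp, if_true, if_pos rfl, cons_append]
        rw [← h2]
    · refine ⟨a :: as, b :: bs, ?_, ?_, ?_⟩
      · simp [lcp, hab]
      · simp [lcp, hab]
      · intro x hx y hy
        simp only [head?_cons, Option.mem_def, Option.some.injEq] at hx hy
        subst hx; subst hy; exact hab

lemma lcp_max : ∀ (p l₁ l₂ : List (α × Bool)), p <+: l₁ → p <+: l₂ →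
    p.length ≤ (lcp l₁ l₂).length
  | [], _, _, _, _ => by simp
  | (x :: p), l₁, l₂, h₁, h₂ => by
    obtain ⟨t₁, rfl⟩ := h₁
    obtain ⟨t₂, ht₂⟩ := h₂
    rw [cons_append] at ht₂
    subst ht₂
    have h := lcp_max p (p ++ t₁) (p ++ t₂) ⟨t₁, rfl⟩ ⟨t₂, rfl⟩
    have heq : lcp (x :: (p ++ t₁)) (x :: (p ++ t₂)) = x :: lcp (p ++ t₁) (p ++ t₂) := by
      simp [lcp]
    rw [cons_append, heq, length_cons, length_cons]
    exact Nat.succ_le_succ h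

lemma mk_single_true (s : α) : mk [(s, true)] = of s := rfl

lemma mk_single_false (s : α) : mk [(s, false)] = (of s)⁻¹ := by
  rw [← mk_single_true, inv_mk]; rfl

lemma mk_comm_of (s : α) : ∀ (M : List (α × Bool)), (∀ y ∈ M, y.1 = s) →
    mk M * of s = of s * mk M
  | [], _ => by rw [← one_eq_mk]; group
  | (y :: M), h => by
    have hy : y.1 = s := h y (by simp)
    have hM := mk_comm_of s M (fun x hx => h x (by simp [hx]))
    have : mk (y :: M) = mk [y] * mk M := by rw [mul_mk]; rfl
    rw [this, mul_assoc, hM, ← mul_assoc, ← mul_assoc]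
    congr 1
    rcases y with ⟨yy, bb⟩
    simp only at hy
    subst hy
    cases bb
    · rw [mk_single_false]; group
    · rw [mk_single_true]

/-- key computation: reduced word of a conjugate of a generator -/
lemma conj_toWord (g : FreeGroup α) (s : α) (L M : List (α × Bool))
    (hg : g.toWord = L ++ M) (hM : ∀ y ∈ M, y.1 = s) (hL : ∀ x ∈ L.getLast?, x.1 ≠ s) :
    (g * of s * g⁻¹).toWord = L ++ (s, true) :: FreeGroup.invRev L := by
  have hgm : g = mk L * mk M := by
    rw [mul_mk, ← hg, mk_toWord]
  have hcomm := mk_comm_of s M hM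
  have hgrp : g * of s * g⁻¹ = mk L * of s * (mk L)⁻¹ := by
    rw [hgm, mul_inv_rev, mul_assoc (mk L), hcomm]
    group
  have hRdL : Rd L := by
    have := rd_toWord g
    rw [hg] at this
    exact this.left
  have hRd : Rd (L ++ (s, true) :: FreeGroup.invRev L) := by
    have h2 : Rd ((s, true) :: FreeGroup.invRev L) := by
      refine List.IsChain.cons hRdL.invRev ?_
      intro y hy
      rw [invRev_head?] at hy
      simp only [Option.mem_def, Option.map_eq_some_iff] at hy
      obtain ⟨x, hx, rfl⟩ := hy
      have := hL x hx
      simp only [ne_eq, Prod.mk.injEq, not_and]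
      intro hc; exact absurd hc this
    refine hRdL.append h2 ?_
    intro x hx y hy
    simp only [head?_cons, Option.mem_def, Option.some.injEq] at hy
    subst hy
    have := hL x hx
    simp only [ne_eq, Prod.mk.injEq, not_and]
    intro hc; exact absurd hc.symm this
  rw [hgrp, ← mk_single_true, mul_mk, inv_mk, mul_mk]
  rw [show L ++ [(s, true)] ++ FreeGroup.invRev L = L ++ (s, true) :: FreeGroup.invRev L by simp]
  exact toWord_mk_eq hRd

lemma split_s (s : α) (L : List (α × Bool)) : ∃ P Q : List (α × Bool),
    L = P ++ Q ∧ (∀ y ∈ Q, y.1 = s) ∧ (∀ x ∈ P.getLast?, x.1 ≠ s) := by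
  induction L using List.reverseRecOn with
  | nil => exact ⟨[], [], by simp⟩
  | append_singleton L x ih =>
    by_cases hx : x.1 = s
    · obtain ⟨P, Q, rfl, hQ, hP⟩ := ih
      refine ⟨P, Q ++ [x], by simp, ?_, hP⟩
      intro y hy
      rcases List.mem_append.1 hy with h | h
      · exact hQ y h
      · simp only [List.mem_singleton] at h; subst h; exact hx
    · refine ⟨L ++ [x], [], by simp, by simp, ?_⟩
      intro y hy
      rw [List.getLast?_append_of_ne_nil L (by simp)] at hy
      simp only [getLast?_singleton, Option.mem_def, Option.some.injEq] at hy
      subst hy; exact hx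

lemma conj_len (g : FreeGroup α) (s : α) (L M : List (α × Bool))
    (hg : g.toWord = L ++ M) (hM : ∀ y ∈ M, y.1 = s) (hL : ∀ x ∈ L.getLast?, x.1 ≠ s) :
    (g * of s * g⁻¹).toWord.length = 2 * L.length + 1 := by
  rw [conj_toWord g s L M hg hM hL]
  simp [invRev_length]
  omega

lemma conj_len_ge (g : FreeGroup α) (s : α) (P : List (α × Bool)) (x : α × Bool)
    (Q : List (α × Bool)) (hg : g.toWord = P ++ x :: Q) (hx : x.1 ≠ s) :
    2 * P.length + 3 ≤ (g * of s * g⁻¹).toWord.length := by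
  obtain ⟨Q₁, Q₂, rfl, hQ₂, hQ₁⟩ := split_s s Q
  have hlast : ∀ y ∈ (P ++ x :: Q₁).getLast?, y.1 ≠ s := by
    intro y hy
    simp only [Option.mem_def] at hy
    rw [List.getLast?_append_cons] at hy
    rcases Q₁.eq_nil_or_concat with rfl | ⟨R, z, rfl⟩
    · simp only [getLast?_singleton, Option.some.injEq] at hy; subst hy; exact hx
    · simp only [List.concat_eq_append] at hy hQ₁
      rw [← List.cons_append, List.getLast?_append_of_ne_nil _ (by simp)] at hy
      simp only [getLast?_singleton, Option.some.injEq] at hy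
      subst hy
      exact hQ₁ z (by rw [List.getLast?_append_of_ne_nil _ (by simp)]; simp)
  have hlen := conj_len g s (P ++ x :: Q₁) Q₂ (by rw [hg]; simp) hQ₂ hlast
  rw [hlen]
  simp only [length_append, length_cons]
  omega

end RL

namespace RL
open FreeGroup List

variable {α : Type*} [DecidableEq α] {L L₁ L₂ : List (α × Bool)}

lemma invRev_append (L₁ L₂ : List (α × Bool)) :
    FreeGroup.invRev (L₁ ++ L₂) = FreeGroup.invRev L₂ ++ FreeGroup.invRev L₁ := by
  simp [FreeGroup.invRev]

lemma invRev_cons (x : α × Bool) (L : List (α × Bool)) :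
    FreeGroup.invRev (x :: L) = FreeGroup.invRev L ++ [(x.1, !x.2)] := by
  simp [FreeGroup.invRev]

lemma invRev_singleton (x : α × Bool) :
    FreeGroup.invRev [x] = [(x.1, !x.2)] := by simp [FreeGroup.invRev]

/-- length additivity implies word concatenation -/
lemma toWord_mul_of_len (X Y : FreeGroup α)
    (h : (X * Y).toWord.length = X.toWord.length + Y.toWord.length) :
    (X * Y).toWord = X.toWord ++ Y.toWord := by
  have hmk : X * Y = mk (X.toWord ++ Y.toWord) := by
    rw [← mul_mk, mk_toWord, mk_toWord]
  have hlen : (mk (X.toWord ++ Y.toWord)).toWord.length = (X.toWord ++ Y.toWord).length := by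
    rw [← hmk, h, List.length_append]
  have := reduce_eq_of_len hlen
  rw [hmk, toWord_mk_eq this]

/-- from the hypothesis on the conjugate length, the word of `g` does not end in `s` -/
lemma last_ne_of_conj_len (g : FreeGroup α) (s : α)
    (h : (g * of s * g⁻¹).toWord.length = 2 * g.toWord.length + 1) :
    ∀ x ∈ g.toWord.getLast?, x.1 ≠ s := by
  obtain ⟨L, M, hg, hM, hL⟩ := split_s s g.toWord
  have hcl := conj_len g s L M hg hM hL
  rw [h] at hcl
  have hlen : g.toWord.length = L.length + M.length := by rw [hg, List.length_append]
  have hM0 : M.length = 0 := by omega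
  have : M = [] := List.eq_nil_of_length_eq_zero hM0
  subst this
  rw [List.append_nil] at hg
  rw [hg]
  exact hL

end RL

namespace RL
open FreeGroup List

variable {α : Type*} [DecidableEq α]

lemma core_ineq (g : FreeGroup α) (s t : α) (bb : Bool) (z p q : List (α × Bool))
    (h1 : Rd (z ++ p)) (h2 : Rd (z ++ q))
    (hP : ∀ x ∈ (z ++ p).getLast?, x.1 ≠ t)
    (hQ : ∀ x ∈ (z ++ q).getLast?, x.1 ≠ s)
    (hj : ∀ x ∈ p.head?, ∀ y ∈ q.head?, x ≠ y)
    (hcond : p = [] → ∀ x ∈ q.head?, x ≠ (t, !bb))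
    (hgeq : g = mk z * (mk p * (mk [(t, bb)] * ((mk p)⁻¹ * mk q)))) :
    2 * (z ++ q).length + 1 ≤ (g * of s * g⁻¹).toWord.length := by
  have Pp : ∀ x ∈ p.getLast?, x.1 ≠ t := by
    intro x hx
    have hpne : p ≠ [] := by rintro rfl; simp at hx
    exact hP x (by rw [List.getLast?_append_of_ne_nil _ hpne]; exact hx)
  have Pq : ∀ x ∈ q.getLast?, x.1 ≠ s := by
    intro x hx
    have hqne : q ≠ [] := by rintro rfl; simp at hx
    exact hQ x (by rw [List.getLast?_append_of_ne_nil _ hqne]; exact hx)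
  -- reducedness of the word W
  have hW : Rd (((z ++ p ++ [(t, bb)]) ++ FreeGroup.invRev p) ++ q) := by
    have r1 : Rd ((z ++ p) ++ [(t, bb)]) := by
      refine h1.append (List.isChain_singleton _) ?_
      intro x hx y hy
      simp only [head?_cons, Option.mem_def, Option.some.injEq] at hy
      subst hy
      have := hP x hx
      simp only [ne_eq, Prod.mk.injEq, not_and]
      intro hc; exact absurd hc.symm this
    have r2 : Rd (((z ++ p) ++ [(t, bb)]) ++ FreeGroup.invRev p) := by
      refine r1.append (h1.right.invRev) ?_
      intro x hx y hy
      rw [List.getLast?_append_of_ne_nil _ (by simp)] at hx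
      simp only [getLast?_singleton, Option.mem_def, Option.some.injEq] at hx
      subst hx
      rw [invRev_head?] at hy
      simp only [Option.mem_def, Option.map_eq_some_iff] at hy
      obtain ⟨x', hx', rfl⟩ := hy
      have : x'.1 ≠ t := Pp x' hx'
      simp only [ne_eq, Prod.mk.injEq, not_and]
      intro hc; exact absurd hc this
    have r3 : Rd ((((z ++ p) ++ [(t, bb)]) ++ FreeGroup.invRev p) ++ q) := by
      refine r2.append h2.right ?_
      intro x hx y hy
      rcases p.eq_nil_or_concat with rfl | ⟨p₀, pl, hp⟩
      · simp only [FreeGroup.invRev, List.map_nil, List.reverse_nil, List.append_nil] at hx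
        rw [List.getLast?_append_of_ne_nil _ (by simp)] at hx
        simp only [getLast?_singleton, Option.mem_def, Option.some.injEq] at hx
        subst hx
        exact hcond rfl y hy
      · rw [List.concat_eq_append] at hp; subst hp
        rw [List.getLast?_append_of_ne_nil _
          (by simp [FreeGroup.invRev]), invRev_getLast?] at hx
        simp only [Option.mem_def, Option.map_eq_some_iff] at hx
        obtain ⟨x', hx', rfl⟩ := hx
        have hne : x' ≠ y := hj x' hx' y hy
        simp only [ne_eq, Prod.mk.injEq, Bool.not_not]
        intro h1c
        exact hne (by rw [h1c])
    simpa using r3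
  -- g.toWord = W
  have hgW : g.toWord = ((z ++ p ++ [(t, bb)]) ++ FreeGroup.invRev p) ++ q := by
    have hgm : g = mk (((z ++ p ++ [(t, bb)]) ++ FreeGroup.invRev p) ++ q) := by
      rw [hgeq, inv_mk, mul_mk, mul_mk, mul_mk, mul_mk]
      congr 1
      simp
    rw [hgm, toWord_mk_eq hW]
  -- now the length bound
  rcases q.eq_nil_or_concat with rfl | ⟨q₀, ql, hq⟩
  · -- q = []
    by_cases hst : t = s
    · subst hst
      rcases p.eq_nil_or_concat with rfl | ⟨p₀, pl, hp⟩
      · -- p = [] : exact value 2|z|+1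
        have hz : g.toWord = z ++ [(t, bb)] := by
          simpa [FreeGroup.invRev] using hgW
        have := conj_len g t z [(t, bb)] hz (by simp) (by
          intro x hx
          exact hP x (by simpa using hx))
        simp only [List.append_nil]
        omega
      · -- p = p₀ ++ [pl], strip past the flip of pl
        rw [List.concat_eq_append] at hp; subst hp
        have hx : (pl.1, !pl.2).1 ≠ t := Pp pl (by
          rw [List.getLast?_append_of_ne_nil _ (by simp)]; simp)
        have hdec : g.toWord = (z ++ (p₀ ++ [pl]) ++ [(t, bb)]) ++
            (pl.1, !pl.2) :: FreeGroup.invRev p₀ := by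
          rw [hgW, invRev_append, invRev_singleton]
          simp
        have := conj_len_ge g t _ _ _ hdec hx
        simp only [List.length_append, List.length_cons, List.length_singleton,
          List.length_nil] at this ⊢
        omega
    · -- t ≠ s : the letter (t,bb) stops stripping
      have hdec : g.toWord = (z ++ p) ++ (t, bb) :: FreeGroup.invRev p := by
        rw [hgW]; simp
      have := conj_len_ge g s _ _ _ hdec (fun h => hst h)
      simp only [List.length_append, List.length_nil] at this ⊢
      omega
  · -- q ends with ql, whose base is not s : no cancellation at all
    rw [List.concat_eq_append] at hq; subst hq
    have hql : ∀ x ∈ (((z ++ p ++ [(t, bb)]) ++ FreeGroup.invRev p) ++ (q₀ ++ [ql])).getLast?,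
        x.1 ≠ s := by
      intro x hx
      rw [List.getLast?_append_of_ne_nil _ (by simp),
        List.getLast?_append_of_ne_nil _ (by simp)] at hx
      simp only [getLast?_singleton, Option.mem_def, Option.some.injEq] at hx
      subst hx
      exact Pq ql (by rw [List.getLast?_append_of_ne_nil _ (by simp)]; simp)
    have := conj_len g s _ [] (by rw [hgW]; simp) (by simp) hql
    rw [this]
    simp only [List.length_append, List.length_cons, List.length_singleton, invRev_length,
      List.length_nil]
    omega

end RL

namespace RL
open FreeGroup List

variable {α : Type*} [DecidableEq α]

lemma rd_conj_word (z p : List (α × Bool)) (t : α) (bb : Bool)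
    (h1 : Rd (z ++ p)) (hP : ∀ x ∈ (z ++ p).getLast?, x.1 ≠ t) :
    Rd (((z ++ p) ++ [(t, bb)]) ++ FreeGroup.invRev p) := by
  have Pp : ∀ x ∈ p.getLast?, x.1 ≠ t := by
    intro x hx
    have hpne : p ≠ [] := by rintro rfl; simp at hx
    exact hP x (by rw [List.getLast?_append_of_ne_nil _ hpne]; exact hx)
  have r1 : Rd ((z ++ p) ++ [(t, bb)]) := by
    refine h1.append (List.isChain_singleton _) ?_
    intro x hx y hy
    simp only [head?_cons, Option.mem_def, Option.some.injEq] at hy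
    subst hy
    have := hP x hx
    simp only [ne_eq, Prod.mk.injEq, not_and]
    intro hc; exact absurd hc.symm this
  refine r1.append (h1.right.invRev) ?_
  intro x hx y hy
  rw [List.getLast?_append_of_ne_nil _ (by simp)] at hx
  simp only [getLast?_singleton, Option.mem_def, Option.some.injEq] at hx
  subst hx
  rw [invRev_head?] at hy
  simp only [Option.mem_def, Option.map_eq_some_iff] at hy
  obtain ⟨x', hx', rfl⟩ := hy
  have : x'.1 ≠ t := Pp x' hx'
  simp only [ne_eq, Prod.mk.injEq, not_and]
  intro hc; exact absurd hc this

lemma rdW (su sv : α) (z a' b' : List (α × Bool))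
    (h1 : Rd (z ++ a')) (h2 : Rd (z ++ b'))
    (hPc : ∀ x ∈ (z ++ a').getLast?, x.1 ≠ su)
    (hPd : ∀ x ∈ (z ++ b').getLast?, x.1 ≠ sv)
    (hhead : ∀ x ∈ a'.head?, ∀ y ∈ b'.head?, x ≠ y)
    (c1 : a' = [] → ∀ x ∈ b'.head?, x ≠ (su, false))
    (c2 : b' = [] → ∀ x ∈ a'.head?, x ≠ (sv, true)) :
    Rd ((((z ++ a') ++ [(su, true)]) ++ FreeGroup.invRev a') ++
      (b' ++ ((sv, true) :: (FreeGroup.invRev b' ++ FreeGroup.invRev z)))) := by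
  have W1 := rd_conj_word z a' su true h1 hPc
  have W2 : Rd (b' ++ ((sv, true) :: (FreeGroup.invRev b' ++ FreeGroup.invRev z))) := by
    have := (rd_conj_word z b' sv false h2 hPd).invRev
    rw [invRev_append, invRev_append, invRev_singleton, invRev_invRev] at this
    simpa [invRev_append] using this
  refine W1.append W2 ?_
  intro x hx y hy
  rcases List.eq_nil_or_concat a' with ha | ⟨a₀, al, ha⟩
  · subst ha
    simp only [FreeGroup.invRev, List.map_nil, List.reverse_nil, List.append_nil] at hx
    rw [List.getLast?_append_of_ne_nil _ (by simp)] at hx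
    simp only [getLast?_singleton, Option.mem_def, Option.some.injEq] at hx
    subst hx
    rcases b' with _ | ⟨bh, bt⟩
    · simp only [List.nil_append, head?_cons, Option.mem_def, Option.some.injEq] at hy
      subst hy
      simp
    · simp only [List.cons_append, head?_cons, Option.mem_def, Option.some.injEq] at hy
      subst hy
      have := c1 rfl bh (by simp)
      simpa using this
  · -- a' nonempty: last of left part is the flip of the head of a'
    have hane : a' ≠ [] := by rw [ha]; simp
    rw [List.getLast?_append_of_ne_nil _ (by simp [FreeGroup.invRev, hane]),
      invRev_getLast?] at hx
    simp only [Option.mem_def, Option.map_eq_some_iff] at hx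
    obtain ⟨⟨u1, u2⟩, hx', rfl⟩ := hx
    simp only [ne_eq, Prod.mk.injEq, Bool.not_not]
    rcases b' with _ | ⟨bh, bt⟩
    · simp only [List.nil_append, head?_cons, Option.mem_def, Option.some.injEq] at hy
      subst hy
      have h2c := c2 rfl (u1, u2) hx'
      intro e1
      exact h2c e1.symm
    · simp only [List.cons_append, head?_cons, Option.mem_def, Option.some.injEq] at hy
      subst hy
      have h2c := hhead (u1, u2) hx' bh (by simp)
      intro e1
      exact h2c e1.symm

lemma condW (su sv : α) (z a' b' : List (α × Bool))
    (hW : Rd ((((z ++ a') ++ [(su, true)]) ++ FreeGroup.invRev a') ++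
      (b' ++ ((sv, true) :: (FreeGroup.invRev b' ++ FreeGroup.invRev z))))) :
    (a' = [] → ∀ x ∈ b'.head?, x ≠ (su, false)) ∧
    (b' = [] → ∀ x ∈ a'.head?, x ≠ (sv, true)) := by
  constructor
  · rintro rfl x hx
    have hbne : b' ≠ [] := by rintro rfl; simp at hx
    have hmem1 : (su, true) ∈ ((((z ++ []) ++ [(su, true)])) ++
        FreeGroup.invRev ([] : List (α × Bool))).getLast? := by
      simp [FreeGroup.invRev]
    have hmem2 : x ∈ (b' ++ ((sv, true) :: (FreeGroup.invRev b' ++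
        FreeGroup.invRev z))).head? := by
      rw [List.head?_append_of_ne_nil _ hbne]; exact hx
    have hj := hW.junction (su, true) hmem1 x hmem2
    simpa using hj
  · rintro rfl x hx
    have hane : a' ≠ [] := by rintro rfl; simp at hx
    have hmem1 : (x.1, !x.2) ∈ ((((z ++ a') ++ [(su, true)])) ++
        FreeGroup.invRev a').getLast? := by
      rw [List.getLast?_append_of_ne_nil _ (by simp [FreeGroup.invRev, hane]),
        invRev_getLast?, hx]
      rfl
    have hmem2 : (sv, true) ∈ (([] : List (α × Bool)) ++ ((sv, true) ::
        (FreeGroup.invRev ([] : List (α × Bool)) ++ FreeGroup.invRev z))).head? := by simp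
    have hj := hW.junction (x.1, !x.2) hmem1 (sv, true) hmem2
    intro hc
    apply hj
    rw [hc]
    simp

lemma len_le_conj (x tl : List (α × Bool)) (t : α) :
    ((mk x) * (mk tl * (of t * ((mk tl)⁻¹ * (mk x)⁻¹)))).toWord.length ≤
      2 * x.length + 2 * tl.length + 1 := by
  have : (mk x) * (mk tl * (of t * ((mk tl)⁻¹ * (mk x)⁻¹))) =
      mk (x ++ (tl ++ ((t, true) :: (FreeGroup.invRev tl ++ FreeGroup.invRev x)))) := by
    rw [inv_mk, inv_mk, ← mk_single_true, mul_mk, mul_mk, mul_mk, mul_mk]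
    rfl
  rw [this]
  have := redLen_mk_le (x ++ (tl ++ ((t, true) :: (FreeGroup.invRev tl ++ FreeGroup.invRev x))))
  simp only [List.length_append, List.length_cons, invRev_length] at this
  omega

end RL
/-- The reduced-word length of an element of a free group. -/
def redLen {m : ℕ} (w : FreeGroup (Fin m)) : ℕ := w.toWord.length

open FreeGroup in
/-- **Lemma (reduction lemma).** Let `u, v` be generators of the free group `F_m` and
`C, D ∈ F_m` with `l(C u C⁻¹) = 2 l(C) + 1` and `l(D v D⁻¹) = 2 l(D) + 1`; set
`f = (f₁, f₂) = (C u C⁻¹, D v D⁻¹)`.  For the Hurwitz action of `σ = σ_1 ∈ B_2`,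
`σ f = (f₂, f₂⁻¹ f₁ f₂)` and `σ⁻¹ f = (f₁ f₂ f₁⁻¹, f₁)`, one has
`l(σ⁻¹ f) ≥ l(f)` and `l(σ f) ≥ l(f)` if and only if there are `Z, A, B ∈ F_m` with
`C = Z A`, `l(C) = l(Z) + l(A)`, `D = Z B`, `l(D) = l(Z) + l(B)` and
`l(C u C⁻¹ D v D⁻¹) = 2 l(Z) + 2 l(A) + 2 l(B) + 2`. -/
theorem reduction_lemma {m : ℕ} (u v C D : FreeGroup (Fin m))
    (hu : ∃ s, u = FreeGroup.of s) (hv : ∃ s, v = FreeGroup.of s)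
    (hC : redLen (C * u * C⁻¹) = 2 * redLen C + 1)
    (hD : redLen (D * v * D⁻¹) = 2 * redLen D + 1) :
    (redLen ((C * u * C⁻¹) * (D * v * D⁻¹) * (C * u * C⁻¹)⁻¹) + redLen (C * u * C⁻¹) ≥
        redLen (C * u * C⁻¹) + redLen (D * v * D⁻¹) ∧
      redLen (D * v * D⁻¹) + redLen ((D * v * D⁻¹)⁻¹ * (C * u * C⁻¹) * (D * v * D⁻¹)) ≥
        redLen (C * u * C⁻¹) + redLen (D * v * D⁻¹)) ↔
    ∃ Z A B : FreeGroup (Fin m),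
      C = Z * A ∧ redLen C = redLen Z + redLen A ∧
      D = Z * B ∧ redLen D = redLen Z + redLen B ∧
      redLen ((C * u * C⁻¹) * (D * v * D⁻¹)) =
        2 * redLen Z + 2 * redLen A + 2 * redLen B + 2 := by
  obtain ⟨su, rfl⟩ := hu
  obtain ⟨sv, rfl⟩ := hv
  simp only [redLen] at hC hD ⊢
  obtain ⟨a', b', hca, hdb, hhead⟩ := RL.lcp_spec C.toWord D.toWord
  set z := RL.lcp C.toWord D.toWord with hz
  have Pc := RL.last_ne_of_conj_len C su hC
  have Pd := RL.last_ne_of_conj_len D sv hD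
  have RdC := RL.rd_toWord C
  have RdD := RL.rd_toWord D
  rw [hca] at Pc RdC
  rw [hdb] at Pd RdD
  have hCq : C = mk z * mk a' := by rw [mul_mk, ← hca, mk_toWord]
  have hDq : D = mk z * mk b' := by rw [mul_mk, ← hdb, mk_toWord]
  have hlc : C.toWord.length = z.length + a'.length := by rw [hca]; simp
  have hld : D.toWord.length = z.length + b'.length := by rw [hdb]; simp
  have hhead' : ∀ x ∈ b'.head?, ∀ y ∈ a'.head?, x ≠ y :=
    fun x hx y hy => (hhead y hy x hx).symm
  -- the candidate reduced word of f₁ * f₂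
  have hprod : (C * of su * C⁻¹) * (D * of sv * D⁻¹) =
      mk ((((z ++ a') ++ [(su, true)]) ++ FreeGroup.invRev a') ++
        (b' ++ ((sv, true) :: (FreeGroup.invRev b' ++ FreeGroup.invRev z)))) := by
    have step : (C * of su * C⁻¹) * (D * of sv * D⁻¹) =
        mk z * (mk a' * (mk [(su, true)] * ((mk a')⁻¹ *
          (mk b' * (mk [(sv, true)] * ((mk b')⁻¹ * (mk z)⁻¹)))))) := by
      rw [hCq, hDq, RL.mk_single_true, RL.mk_single_true]
      group
    rw [step, inv_mk, inv_mk, inv_mk, mul_mk, mul_mk, mul_mk, mul_mk, mul_mk, mul_mk, mul_mk]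
    exact congrArg mk (by simp)
  -- Cond → first inequality
  have lhs1 : (a' = [] → ∀ x ∈ b'.head?, x ≠ (su, false)) →
      2 * D.toWord.length + 1 ≤
        ((C * of su * C⁻¹) * (D * of sv * D⁻¹) * (C * of su * C⁻¹)⁻¹).toWord.length := by
    intro c1
    have hcore := RL.core_ineq (mk z * (mk a' * (mk [(su, true)] * ((mk a')⁻¹ * mk b'))))
      sv su true z a' b' RdC RdD Pc Pd hhead c1 rfl
    have heq : (C * of su * C⁻¹) * (D * of sv * D⁻¹) * (C * of su * C⁻¹)⁻¹ =
        (mk z * (mk a' * (mk [(su, true)] * ((mk a')⁻¹ * mk b')))) * of sv *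
        (mk z * (mk a' * (mk [(su, true)] * ((mk a')⁻¹ * mk b'))))⁻¹ := by
      rw [hCq, hDq, RL.mk_single_true]
      group
    rw [heq]
    have hlen : 2 * D.toWord.length + 1 = 2 * (z ++ b').length + 1 := by
      rw [hld]; simp
    rw [hlen]
    exact hcore
  -- Cond → second inequality
  have lhs2 : (b' = [] → ∀ x ∈ a'.head?, x ≠ (sv, true)) →
      2 * C.toWord.length + 1 ≤
        ((D * of sv * D⁻¹)⁻¹ * (C * of su * C⁻¹) * (D * of sv * D⁻¹)).toWord.length := by
    intro c2
    have c2' : b' = [] → ∀ x ∈ a'.head?, x ≠ (sv, !false) := by simpa using c2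
    have hcore := RL.core_ineq (mk z * (mk b' * (mk [(sv, false)] * ((mk b')⁻¹ * mk a'))))
      su sv false z b' a' RdD RdC Pd Pc hhead' c2' rfl
    have heq : (D * of sv * D⁻¹)⁻¹ * (C * of su * C⁻¹) * (D * of sv * D⁻¹) =
        (mk z * (mk b' * (mk [(sv, false)] * ((mk b')⁻¹ * mk a')))) * of su *
        (mk z * (mk b' * (mk [(sv, false)] * ((mk b')⁻¹ * mk a'))))⁻¹ := by
      rw [hCq, hDq, RL.mk_single_false]
      group
    rw [heq]
    have hlen : 2 * C.toWord.length + 1 = 2 * (z ++ a').length + 1 := by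
      rw [hlc]; simp
    rw [hlen]
    exact hcore
  -- first inequality → cond1
  have getc1 : ((C * of su * C⁻¹) * (D * of sv * D⁻¹) * (C * of su * C⁻¹)⁻¹).toWord.length +
        (C * of su * C⁻¹).toWord.length ≥
        (C * of su * C⁻¹).toWord.length + (D * of sv * D⁻¹).toWord.length →
      (a' = [] → ∀ x ∈ b'.head?, x ≠ (su, false)) := by
    intro hi ha x hx hxe
    subst ha
    rcases b' with _ | ⟨bh, bt⟩
    · simp at hx
    · simp only [List.head?_cons, Option.mem_def, Option.some.injEq] at hx
      subst hx
      subst hxe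
      have hzc : z = C.toWord := by simpa using hca.symm
      have hDq2 : D = C * (mk [(su, false)] * mk bt) := by
        rw [hDq, hzc, mk_toWord, mul_mk]
        rfl
      have hfe : (C * of su * C⁻¹) * (D * of sv * D⁻¹) * (C * of su * C⁻¹)⁻¹ =
          mk C.toWord * (mk bt * (of sv * ((mk bt)⁻¹ * (mk C.toWord)⁻¹))) := by
        rw [hDq2, RL.mk_single_false, mk_toWord]
        group
      have hle := RL.len_le_conj C.toWord bt sv
      rw [← hfe] at hle
      have hldc : D.toWord.length = C.toWord.length + (bt.length + 1) := by
        rw [hld, hzc]; simp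
      omega
  -- second inequality → cond2
  have getc2 : (D * of sv * D⁻¹).toWord.length +
        ((D * of sv * D⁻¹)⁻¹ * (C * of su * C⁻¹) * (D * of sv * D⁻¹)).toWord.length ≥
        (C * of su * C⁻¹).toWord.length + (D * of sv * D⁻¹).toWord.length →
      (b' = [] → ∀ x ∈ a'.head?, x ≠ (sv, true)) := by
    intro hi hb x hx hxe
    subst hb
    rcases a' with _ | ⟨ah, at'⟩
    · simp at hx
    · simp only [List.head?_cons, Option.mem_def, Option.some.injEq] at hx
      subst hx
      subst hxe
      have hzd : z = D.toWord := by simpa using hdb.symm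
      have hCq2 : C = D * (mk [(sv, true)] * mk at') := by
        rw [hCq, hzd, mk_toWord, mul_mk]
        rfl
      have hfe : (D * of sv * D⁻¹)⁻¹ * (C * of su * C⁻¹) * (D * of sv * D⁻¹) =
          mk D.toWord * (mk at' * (of su * ((mk at')⁻¹ * (mk D.toWord)⁻¹))) := by
        rw [hCq2, RL.mk_single_true, mk_toWord]
        group
      have hle := RL.len_le_conj D.toWord at' su
      rw [← hfe] at hle
      have hlcd : C.toWord.length = D.toWord.length + (at'.length + 1) := by
        rw [hlc, hzd]; simp
      omega
  -- Cond → RHS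
  have condRHS : (a' = [] → ∀ x ∈ b'.head?, x ≠ (su, false)) →
      (b' = [] → ∀ x ∈ a'.head?, x ≠ (sv, true)) →
      ∃ Z A B : FreeGroup (Fin m),
        C = Z * A ∧ C.toWord.length = Z.toWord.length + A.toWord.length ∧
        D = Z * B ∧ D.toWord.length = Z.toWord.length + B.toWord.length ∧
        ((C * of su * C⁻¹) * (D * of sv * D⁻¹)).toWord.length =
          2 * Z.toWord.length + 2 * A.toWord.length + 2 * B.toWord.length + 2 := by
    intro c1 c2
    have hzW : (mk z).toWord = z := RL.toWord_mk_eq RdC.left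
    have haW : (mk a').toWord = a' := RL.toWord_mk_eq RdC.right
    have hbW : (mk b').toWord = b' := RL.toWord_mk_eq RdD.right
    have hRdW := RL.rdW su sv z a' b' RdC RdD Pc Pd hhead c1 c2
    refine ⟨mk z, mk a', mk b', hCq, ?_, hDq, ?_, ?_⟩
    · rw [hzW, haW]; exact hlc
    · rw [hzW, hbW]; exact hld
    · rw [hprod, RL.toWord_mk_eq hRdW, hzW, haW, hbW]
      simp only [List.length_append, List.length_cons, List.length_singleton, List.length_nil,
        FreeGroup.invRev_length]
      omega
  -- RHS → Cond
  have rhsCond : (∃ Z A B : FreeGroup (Fin m),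
        C = Z * A ∧ C.toWord.length = Z.toWord.length + A.toWord.length ∧
        D = Z * B ∧ D.toWord.length = Z.toWord.length + B.toWord.length ∧
        ((C * of su * C⁻¹) * (D * of sv * D⁻¹)).toWord.length =
          2 * Z.toWord.length + 2 * A.toWord.length + 2 * B.toWord.length + 2) →
      (a' = [] → ∀ x ∈ b'.head?, x ≠ (su, false)) ∧
      (b' = [] → ∀ x ∈ a'.head?, x ≠ (sv, true)) := by
    rintro ⟨Z, A, B, h1, h2, h3, h4, h5⟩
    rw [h1] at h2
    rw [h3] at h4
    have hCW : C.toWord = Z.toWord ++ A.toWord := by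
      rw [h1]; exact RL.toWord_mul_of_len Z A h2
    have hDW : D.toWord = Z.toWord ++ B.toWord := by
      rw [h3]; exact RL.toWord_mul_of_len Z B h4
    have hzle := RL.lcp_max Z.toWord C.toWord D.toWord ⟨A.toWord, hCW.symm⟩
      ⟨B.toWord, hDW.symm⟩
    rw [← hz] at hzle
    have hlen_le := RL.redLen_mk_le ((((z ++ a') ++ [(su, true)]) ++ FreeGroup.invRev a') ++
        (b' ++ ((sv, true) :: (FreeGroup.invRev b' ++ FreeGroup.invRev z))))
    rw [← hprod] at hlen_le
    rw [← h1, ← h3] at *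
    have hWlen : ((C * of su * C⁻¹) * (D * of sv * D⁻¹)).toWord.length =
        ((((z ++ a') ++ [(su, true)]) ++ FreeGroup.invRev a') ++
          (b' ++ ((sv, true) :: (FreeGroup.invRev b' ++ FreeGroup.invRev z)))).length := by
      simp only [List.length_append, List.length_cons, List.length_singleton, List.length_nil,
        FreeGroup.invRev_length] at hlen_le ⊢
      omega
    have hRdW : RL.Rd ((((z ++ a') ++ [(su, true)]) ++ FreeGroup.invRev a') ++
        (b' ++ ((sv, true) :: (FreeGroup.invRev b' ++ FreeGroup.invRev z)))) := by
      apply RL.reduce_eq_of_len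
      rw [← hprod]
      exact hWlen
    exact RL.condW su sv z a' b' hRdW
  constructor
  · rintro ⟨hi1, hi2⟩
    exact condRHS (getc1 hi1) (getc2 hi2)
  · intro hR
    obtain ⟨c1, c2⟩ := rhsCond hR
    constructor
    · have := lhs1 c1
      omega
    · have := lhs2 c2
      omega
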